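/- For every infinite binary word x, the following are equivalent: (i) 1·μ(x) is overlap-free and μ(x) begins with 0; (ii) 0·x is overlap-free and x begins with 0. -/

import Mathlib

/-- An overlap: a word of the form a x a x a, with `a` a single letter. -/
def Overlap (w : List (Fin 2)) : Prop :=
  ∃ (a : Fin 2) (x : List (Fin 2)), w = [a] ++ x ++ [a] ++ x ++ [a]

/-- `w` occurs as a (contiguous) factor of the infinite word `x`. -/
def FactorOf (w : List (Fin 2)) (x : ℕ → Fin 2) : Prop :=
  ∃ i, w = (List.range w.length).map (fun j => x (i + j))

/-- An infinite binary word is overlap-free if no finite factor is an overlap. -/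
def OverlapFree (x : ℕ → Fin 2) : Prop :=
  ∀ w, FactorOf w x → ¬ Overlap w

/-- The Thue–Morse morphism applied to an infinite word. -/
def mu (x : ℕ → Fin 2) : ℕ → Fin 2 :=
  fun n => if n % 2 = 0 then x (n / 2) else 1 - x (n / 2)

/-- Prepend a finite word to an infinite word. -/
def prepend (p : List (Fin 2)) (w : ℕ → Fin 2) : ℕ → Fin 2 :=
  fun n => if h : n < p.length then p.get ⟨n, h⟩ else w (n - p.length)

/-- `x` begins with the finite word `p`. -/
def BeginsWith (x : ℕ → Fin 2) (p : List (Fin 2)) : Prop :=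
  ∀ i < p.length, x i = p.getD i 0

/-! ### Auxiliary machinery -/

/-- The infinite word `y` contains an overlap, phrased via periodicity. -/
def HasOv (y : ℕ → Fin 2) : Prop :=
  ∃ s p, 1 ≤ p ∧ ∀ i ≤ p, y (s + i) = y (s + i + p)

lemma fin2_ne_one_sub : ∀ a : Fin 2, a ≠ 1 - a := by decide

lemma fin2_sub_sub : ∀ a : Fin 2, 1 - (1 - a) = a := by decide

lemma fin2_one_sub_inj : ∀ {a b : Fin 2}, (1 : Fin 2) - a = 1 - b → a = b := by decide

lemma map_range_split (f : ℕ → Fin 2) (q : ℕ) (hf : ∀ j ≤ q + 1, f j = f (j + (q + 1))) :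
    (List.range (2 * (q + 1) + 1)).map f =
      [f 0] ++ (List.range q).map (fun j => f (j + 1)) ++ [f 0] ++
        (List.range q).map (fun j => f (j + 1)) ++ [f 0] := by
  have hza : (List.range (q + 1)).map f = [f 0] ++ (List.range q).map (fun j => f (j + 1)) := by
    rw [List.range_succ_eq_map, List.map_cons, List.map_map]
    rfl
  have h1 : (List.range (2 * (q + 1) + 1)).map f =
      (List.range (q + 1)).map f ++ (List.range (q + 2)).map (fun j => f ((q + 1) + j)) := by
    rw [show 2 * (q + 1) + 1 = (q + 1) + (q + 2) by omega, List.range_add, List.map_append,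
      List.map_map]
    rfl
  have h2 : (List.range (q + 2)).map (fun j => f ((q + 1) + j)) =
      (List.range (q + 2)).map f := by
    refine List.map_congr_left fun j hj => ?_
    rw [List.mem_range] at hj
    show f ((q + 1) + j) = f j
    rw [show (q + 1) + j = j + (q + 1) by omega]
    exact (hf j (by omega)).symm
  have h3 : (List.range (q + 2)).map f = (List.range (q + 1)).map f ++ [f (q + 1)] := by
    rw [show q + 2 = (q + 1) + 1 from rfl, List.range_succ, List.map_append]
    rfl
  have h4 : f (q + 1) = f 0 := by
    have := hf 0 (by omega)
    simpa using this.symm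
  rw [h1, h2, h3, h4, hza]
  simp [List.append_assoc]

lemma split_period (f : ℕ → Fin 2) (a : Fin 2) (xx : List (Fin 2))
    (h : (List.range (2 * xx.length + 3)).map f = [a] ++ xx ++ [a] ++ xx ++ [a]) :
    ∀ k ≤ xx.length + 1, f k = f (k + (xx.length + 1)) := by
  have h1 : (List.range (2 * xx.length + 3)).map f =
      (List.range (xx.length + 1)).map f ++
        ((List.range (xx.length + 1)).map (fun j => f ((xx.length + 1) + j)) ++
          [f (2 * xx.length + 2)]) := by
    rw [show 2 * xx.length + 3 = (xx.length + 1) + (xx.length + 2) by omega, List.range_add,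
      List.map_append, List.map_map]
    congr 1
    rw [show xx.length + 2 = (xx.length + 1) + 1 from rfl, List.range_succ, List.map_append]
    congr 1
    show [f ((xx.length + 1) + (xx.length + 1))] = [f (2 * xx.length + 2)]
    rw [show (xx.length + 1) + (xx.length + 1) = 2 * xx.length + 2 by omega]
  have hR : ([a] ++ xx ++ [a] ++ xx ++ [a] : List (Fin 2)) =
      ([a] ++ xx) ++ (([a] ++ xx) ++ [a]) := by
    simp [List.append_assoc]
  rw [h1, hR] at h
  have hl1 : ((List.range (xx.length + 1)).map f).length = ([a] ++ xx).length := by simp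
  obtain ⟨E1, E2⟩ := List.append_inj h hl1
  have hl2 : ((List.range (xx.length + 1)).map (fun j => f ((xx.length + 1) + j))).length =
      ([a] ++ xx).length := by simp
  obtain ⟨E3, E4⟩ := List.append_inj E2 hl2
  have ME : (List.range (xx.length + 1)).map f =
      (List.range (xx.length + 1)).map (fun j => f ((xx.length + 1) + j)) := E1.trans E3.symm
  have key : ∀ k, k < xx.length + 1 → f k = f ((xx.length + 1) + k) := by
    intro k hk
    have := List.getElem_of_eq ME (by simpa using hk :
      k < ((List.range (xx.length + 1)).map f).length)
    simpa using this
  have hfa : f 0 = a := by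
    have := List.getElem_of_eq E1 (by simp :
      (0 : ℕ) < ((List.range (xx.length + 1)).map f).length)
    simpa using this
  have hlast : f (2 * xx.length + 2) = a := by
    have : ([f (2 * xx.length + 2)] : List (Fin 2)) = [a] := E4
    simpa using this
  intro k hk
  rcases lt_or_eq_of_le hk with hk' | hk'
  · rw [show k + (xx.length + 1) = (xx.length + 1) + k by omega]
    exact key k hk'
  · subst hk'
    rw [show xx.length + 1 + (xx.length + 1) = 2 * xx.length + 2 by omega, hlast, ← hfa]
    have h0 := key 0 (by omega)
    simpa using h0.symm

lemma overlapFree_iff_not_hasOv (y : ℕ → Fin 2) : OverlapFree y ↔ ¬ HasOv y := by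
  constructor
  · rintro hOF ⟨s, p, hp, hper⟩
    obtain ⟨q, rfl⟩ : ∃ q, p = q + 1 := ⟨p - 1, by omega⟩
    have hw := map_range_split (fun j => y (s + j)) q (fun j hj => by
      show y (s + j) = y (s + (j + (q + 1)))
      rw [show s + (j + (q + 1)) = s + j + (q + 1) by omega]
      exact hper j hj)
    refine hOF ((List.range (2 * (q + 1) + 1)).map (fun j => y (s + j))) ⟨s, ?_⟩ ⟨_, _, hw⟩
    rw [show ((List.range (2 * (q + 1) + 1)).map (fun j => y (s + j))).length =
      2 * (q + 1) + 1 by simp]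
  · rintro hn w ⟨i, hfac⟩ ⟨a, xx, hov⟩
    apply hn
    have hlen : w.length = 2 * xx.length + 3 := by
      rw [hov]
      simp
      omega
    have h' : (List.range (2 * xx.length + 3)).map (fun j => y (i + j)) =
        [a] ++ xx ++ [a] ++ xx ++ [a] := by
      rw [← hlen, ← hfac]
      exact hov
    have hper := split_period _ a xx h'
    refine ⟨i, xx.length + 1, by omega, fun k hk => ?_⟩
    have := hper k hk
    try simp only at this
    rw [show i + k + (xx.length + 1) = i + (k + (xx.length + 1)) by omega]
    exact this

lemma hmu_even (y : ℕ → Fin 2) (n : ℕ) : mu y (2 * n) = y n := by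
  unfold mu
  rw [if_pos (by omega)]
  congr 1
  omega

lemma hmu_odd (y : ℕ → Fin 2) (n : ℕ) : mu y (2 * n + 1) = 1 - y n := by
  unfold mu
  rw [if_neg (by omega)]
  congr 2
  omega

/-- A word of the form `μ(v)` admits no overlap of odd period. -/
lemma no_odd_period (u : ℕ → Fin 2) (hodd : ∀ n, u (2 * n + 1) = 1 - u (2 * n))
    (s p : ℕ) (hp : p % 2 = 1) (hper : ∀ i ≤ p, u (s + i) = u (s + i + p)) : False := by
  have hpair : ∀ j, j % 2 = 1 → u j = 1 - u (j - 1) := by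
    intro j hj
    have h := hodd (j / 2)
    rw [show 2 * (j / 2) + 1 = j by omega, show 2 * (j / 2) = j - 1 by omega] at h
    exact h
  have hper' : ∀ m, s ≤ m → m ≤ s + p → u m = u (m + p) := by
    intro m h1 h2
    have := hper (m - s) (by omega)
    rwa [show s + (m - s) = m by omega] at this
  have chain : ∀ j, j % 2 = 0 → s ≤ j → j + 2 ≤ s + p → u (j + 2) = u j := by
    intro j hj0 hj1 hj2
    have h1 : u (j + 1) = 1 - u j := by
      have := hpair (j + 1) (by omega)
      rwa [show j + 1 - 1 = j by omega] at this
    have h2 : u (j + 1) = u (j + 1 + p) := hper' (j + 1) (by omega) (by omega)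
    have h3 : u (j + 2) = u (j + 2 + p) := hper' (j + 2) (by omega) (by omega)
    have h4 : u (j + 2 + p) = 1 - u (j + 1 + p) := by
      have := hpair (j + 2 + p) (by omega)
      rwa [show j + 2 + p - 1 = j + 1 + p by omega] at this
    rw [h3, h4, ← h2, h1]
    exact fin2_sub_sub _
  set e := if s % 2 = 0 then s else s + 1 with he
  have he0 : e % 2 = 0 := by rw [he]; split <;> omega
  have he1 : s ≤ e ∧ e ≤ s + 1 := by rw [he]; constructor <;> split <;> omega
  have evenconst : ∀ m, e + 2 * m ≤ s + p → u (e + 2 * m) = u e := by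
    intro m
    induction m with
    | zero => intro _; rfl
    | succ k ih =>
      intro hm
      have h1 : u (e + 2 * k + 2) = u (e + 2 * k) :=
        chain (e + 2 * k) (by omega) (by omega) (by omega)
      rw [show e + 2 * (k + 1) = e + 2 * k + 2 by omega, h1]
      exact ih (by omega)
  rcases Nat.even_or_odd s with hs | hs
  · have hse : s % 2 = 0 := by rcases hs with ⟨k, hk⟩; omega
    have hee : e = s := by rw [he, if_pos hse]
    have h1 : u s = u (s + p) := hper' s (by omega) (by omega)
    have h2 : u (s + p) = 1 - u (s + p - 1) := hpair (s + p) (by omega)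
    have h3 : u (s + p - 1) = u s := by
      have := evenconst ((p - 1) / 2) (by omega)
      rwa [show e + 2 * ((p - 1) / 2) = s + p - 1 by omega, hee] at this
    rw [h2, h3] at h1
    exact fin2_ne_one_sub (u s) h1
  · have hse : ¬ s % 2 = 0 := by rcases hs with ⟨k, hk⟩; omega
    have hee : e = s + 1 := by rw [he, if_neg hse]
    have h1 : u (s + 1) = u (s + 1 + p) := hper' (s + 1) (by omega) (by omega)
    have h2 : u (s + 1 + p) = 1 - u (s + p) := by
      have := hpair (s + 1 + p) (by omega)
      rwa [show s + 1 + p - 1 = s + p by omega] at this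
    have h3 : u (s + p) = u (s + 1) := by
      have := evenconst ((p - 1) / 2) (by omega)
      rwa [show e + 2 * ((p - 1) / 2) = s + p by omega, hee] at this
    rw [h2, h3] at h1
    exact fin2_ne_one_sub (u (s + 1)) h1

lemma hv0 (x : ℕ → Fin 2) : prepend [0] x 0 = 0 := by simp [prepend]

lemma hvs (x : ℕ → Fin 2) (n : ℕ) : prepend [0] x (n + 1) = x n := by simp [prepend]

lemma hu_even (x : ℕ → Fin 2) (n : ℕ) :
    mu (prepend [0] x) (2 * n) = prepend [0] x n := hmu_even _ n

lemma hu_odd (x : ℕ → Fin 2) (n : ℕ) :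
    mu (prepend [0] x) (2 * n + 1) = 1 - mu (prepend [0] x) (2 * n) := by
  rw [hmu_odd, hmu_even]

lemma hshift (x : ℕ → Fin 2) (n : ℕ) :
    prepend [1] (mu x) n = mu (prepend [0] x) (n + 1) := by
  cases n with
  | zero =>
    have h0 : mu (prepend [0] x) 1 = 1 := by
      have h := hu_odd x 0
      have h2 := hu_even x 0
      rw [show 2 * 0 + 1 = 1 by omega] at h
      rw [show 2 * 0 = 0 by omega] at h h2
      rw [h, h2, hv0 x]
      decide
    rw [show (0 : ℕ) + 1 = 1 from rfl, h0]
    simp [prepend]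
  | succ m =>
    have hl : prepend [1] (mu x) (m + 1) = mu x m := by
      simp [prepend]
    rw [hl]
    rcases Nat.even_or_odd m with ⟨k, hk⟩ | ⟨k, hk⟩
    · rw [show m = 2 * k by omega, show 2 * k + 1 + 1 = 2 * (k + 1) by omega,
        hmu_even, hu_even, hvs]
    · rw [show m = 2 * k + 1 by omega, show 2 * k + 1 + 1 + 1 = 2 * (k + 1) + 1 by omega,
        hmu_odd, hu_odd, hu_even, hvs]

lemma mainA (x : ℕ → Fin 2) (h : HasOv (prepend [0] x)) : HasOv (prepend [1] (mu x)) := by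
  obtain ⟨s, p, hp, hper⟩ := h
  have key : ∀ i, i ≤ 2 * p →
      mu (prepend [0] x) (2 * s + i) = mu (prepend [0] x) (2 * s + i + 2 * p) := by
    intro i hi
    rcases Nat.even_or_odd i with ⟨m, hm⟩ | ⟨m, hm⟩
    · rw [show 2 * s + i = 2 * (s + m) by omega,
        show 2 * (s + m) + 2 * p = 2 * (s + m + p) by omega, hu_even, hu_even]
      exact hper m (by omega)
    · rw [show 2 * s + i = 2 * (s + m) + 1 by omega,
        show 2 * (s + m) + 1 + 2 * p = 2 * (s + m + p) + 1 by omega,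
        hu_odd, hu_odd, hu_even, hu_even]
      rw [hper m (by omega)]
  rcases Nat.eq_zero_or_pos s with hs | hs
  · subst hs
    have e1 : mu (prepend [0] x) (2 * p + 1) = mu (prepend [0] x) (4 * p + 1) := by
      have k2 : mu (prepend [0] x) (2 * p) = mu (prepend [0] x) (4 * p) := by
        have h := key (2 * p) (le_refl _)
        rwa [show 2 * 0 + 2 * p = 2 * p by omega,
          show 2 * p + 2 * p = 4 * p by omega] at h
      have o1 := hu_odd x p
      have o2 := hu_odd x (2 * p)
      rw [show 2 * (2 * p) + 1 = 4 * p + 1 by omega, show 2 * (2 * p) = 4 * p by omega] at o2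
      rw [o1, o2, k2]
    refine ⟨0, 2 * p, by omega, fun i hi => ?_⟩
    rw [hshift, hshift]
    rcases lt_or_eq_of_le hi with hi' | hi'
    · have h := key (i + 1) (by omega)
      rwa [show 2 * 0 + (i + 1) = 0 + i + 1 by omega,
        show 0 + i + 1 + 2 * p = 0 + i + 2 * p + 1 by omega] at h
    · subst hi'
      rw [show 0 + 2 * p + 1 = 2 * p + 1 by omega,
        show 0 + 2 * p + 2 * p + 1 = 4 * p + 1 by omega]
      exact e1
  · refine ⟨2 * s - 1, 2 * p, by omega, fun i hi => ?_⟩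
    rw [hshift, hshift, show 2 * s - 1 + i + 1 = 2 * s + i by omega,
      show 2 * s - 1 + i + 2 * p + 1 = 2 * s + i + 2 * p by omega]
    exact key i hi

lemma mainB (x : ℕ → Fin 2) (h : HasOv (prepend [1] (mu x))) : HasOv (prepend [0] x) := by
  obtain ⟨s, p, hp, hper⟩ := h
  have hper' : ∀ i, i ≤ p →
      mu (prepend [0] x) (s + 1 + i) = mu (prepend [0] x) (s + 1 + i + p) := by
    intro i hi
    have h := hper i hi
    rwa [hshift, hshift, show s + i + 1 = s + 1 + i by omega,
      show s + i + p + 1 = s + 1 + i + p by omega] at h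
  rcases Nat.even_or_odd p with ⟨q, hq⟩ | ⟨q, hq⟩
  · -- p = 2q
    have hq1 : 1 ≤ q := by omega
    rcases Nat.even_or_odd (s + 1) with ⟨m, hm⟩ | ⟨m, hm⟩
    · refine ⟨m, q, hq1, fun i hi => ?_⟩
      have h := hper' (2 * i) (by omega)
      rwa [show s + 1 + 2 * i = 2 * (m + i) by omega,
        show 2 * (m + i) + p = 2 * (m + i + q) by omega,
        hu_even, hu_even] at h
    · refine ⟨m, q, hq1, fun i hi => ?_⟩
      rcases Nat.eq_zero_or_pos i with hi0 | hi0
      · subst hi0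
        have h0 := hper' 0 (by omega)
        rw [show s + 1 + 0 = 2 * m + 1 by omega,
          show 2 * m + 1 + p = 2 * (m + q) + 1 by omega,
          hu_odd, hu_odd, hu_even, hu_even] at h0
        exact fin2_one_sub_inj h0
      · have h := hper' (2 * i - 1) (by omega)
        rwa [show s + 1 + (2 * i - 1) = 2 * (m + i) by omega,
          show 2 * (m + i) + p = 2 * (m + i + q) by omega,
          hu_even, hu_even] at h
  · -- p odd: impossible
    exfalso
    refine no_odd_period (mu (prepend [0] x)) (fun n => hu_odd x n) (s + 1) p (by omega) hper'

lemma beginsWith_single (y : ℕ → Fin 2) : BeginsWith y [0] ↔ y 0 = 0 := by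
  constructor
  · intro h
    simpa using h 0 (by simp)
  · intro h i hi
    simp at hi
    subst hi
    simpa using h

theorem one_mu_begins_0_iff (x : ℕ → Fin 2) :
    (OverlapFree (prepend [1] (mu x)) ∧ BeginsWith (mu x) [0]) ↔
      (OverlapFree (prepend [0] x) ∧ BeginsWith x [0]) := by
  have hmu0 : mu x 0 = x 0 := by
    have := hmu_even x 0
    rwa [show 2 * 0 = 0 by omega] at this
  rw [overlapFree_iff_not_hasOv, overlapFree_iff_not_hasOv,
    beginsWith_single, beginsWith_single, hmu0]
  constructor
  · rintro ⟨h1, h2⟩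
    exact ⟨fun h => h1 (mainA x h), h2⟩
  · rintro ⟨h1, h2⟩
    exact ⟨fun h => h1 (mainB x h), h2⟩
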